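/- Suppose β(Ra) = σ(Ra) + iρ(Ra) is a root of the real cubic a₃β³ + a₂β² + a₁β + a₀ = 0 whose coefficients a₁, a₀ depend affinely on Ra (with a₂, a₃ constant in Ra), and at Ra = Ra_c we have σ(Ra_c) = 0 and ρ(Ra_c) ≠ 0. Then differentiating the equation in Ra at Ra_c yields σ'(Ra_c) = (a₁a₀' − a₀a₁') / (2a₂²ρ² + 2a₁²); in particular σ'(Ra_c) > 0 if and only if a₁a₀' − a₀a₁' > 0. -/

import Mathlib

/-- For a differentiable branch `β(Ra) = σ(Ra) + iρ(Ra)` of roots of the cubic whose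
coefficients `a₁, a₀` depend on `Ra`, if at `Ra_c` the root is purely imaginary
(`σ = 0`, `ρ ≠ 0`, with `a₁a₂ = a₀a₃`), then
`σ'(Ra_c) = (a₁a₀' − a₀a₁')/(2a₂²ρ² + 2a₁²)`, so `σ'(Ra_c) > 0 ↔ a₁a₀' − a₀a₁' > 0`. -/
theorem stmt6 (a₂ a₃ : ℝ) (a₁ a₀ σ ρ : ℝ → ℝ) (a₁' a₀' σ' ρ' Rac : ℝ)
    (h₂ : 0 < a₂) (h₃ : 0 < a₃)
    (ha₁ : HasDerivAt a₁ a₁' Rac) (ha₀ : HasDerivAt a₀ a₀' Rac)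
    (hσ : HasDerivAt σ σ' Rac) (hρ : HasDerivAt ρ ρ' Rac)
    (hroot : ∀ Ra : ℝ,
      (a₃ : ℂ) * ((σ Ra : ℂ) + (ρ Ra : ℂ) * Complex.I) ^ 3
        + (a₂ : ℂ) * ((σ Ra : ℂ) + (ρ Ra : ℂ) * Complex.I) ^ 2
        + (a₁ Ra : ℂ) * ((σ Ra : ℂ) + (ρ Ra : ℂ) * Complex.I) + (a₀ Ra : ℂ) = 0)
    (hσc : σ Rac = 0) (hρc : ρ Rac ≠ 0)
    (hRH : a₁ Rac * a₂ = a₀ Rac * a₃) :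
    σ' = (a₁ Rac * a₀' - a₀ Rac * a₁') / (2 * a₂ ^ 2 * (ρ Rac) ^ 2 + 2 * (a₁ Rac) ^ 2) ∧
    (0 < σ' ↔ 0 < a₁ Rac * a₀' - a₀ Rac * a₁') := by
  -- Extract real and imaginary parts of the root equation
  have parts : ∀ Ra : ℝ,
      a₃ * ((σ Ra)^3 - 3*σ Ra*(ρ Ra)^2) + a₂ * ((σ Ra)^2 - (ρ Ra)^2) + (a₁ Ra * σ Ra + a₀ Ra) = 0 ∧
      a₃ * (3*(σ Ra)^2*ρ Ra - (ρ Ra)^3) + a₂ * (2*σ Ra*ρ Ra) + a₁ Ra * ρ Ra = 0 := by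
    intro Ra
    set s := σ Ra
    set r := ρ Ra
    have h2 : ((a₃ * (s^3 - 3*s*r^2) + a₂ * (s^2 - r^2) + (a₁ Ra * s + a₀ Ra) : ℝ) : ℂ)
        + ((a₃ * (3*s^2*r - r^3) + a₂ * (2*s*r) + a₁ Ra * r : ℝ) : ℂ) * Complex.I = 0 := by
      rw [← hroot Ra]; push_cast
      linear_combination (-3*(a₃:ℂ)*s*r^2 - (a₂:ℂ)*r^2 - (a₃:ℂ)*r^3*Complex.I) * Complex.I_sq
    rw [Complex.ext_iff] at h2
    constructor
    · simpa [← Complex.ofReal_pow] using h2.1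
    · simpa [← Complex.ofReal_pow] using h2.2
  -- coefficients at the critical point
  have e0re : a₀ Rac = a₂ * (ρ Rac)^2 := by
    have := (parts Rac).1
    rw [hσc] at this
    linear_combination this
  have e0im : a₁ Rac = a₃ * (ρ Rac)^2 := by
    have h := (parts Rac).2
    rw [hσc] at h
    have h' : a₁ Rac * ρ Rac = (a₃ * (ρ Rac)^2) * ρ Rac := by linear_combination h
    exact mul_right_cancel₀ hρc h'
  -- derivative of the real part
  have hPcomb := ((((hσ.pow 3).sub ((hσ.const_mul 3).mul (hρ.pow 2))).const_mul a₃).add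
      (((hσ.pow 2).sub (hρ.pow 2)).const_mul a₂)).add ((ha₁.mul hσ).add ha₀)
  have hP0 : HasDerivAt (fun Ra => a₃ * ((σ Ra)^3 - 3*σ Ra*(ρ Ra)^2)
      + a₂ * ((σ Ra)^2 - (ρ Ra)^2) + (a₁ Ra * σ Ra + a₀ Ra)) 0 Rac := by
    have hf : (fun Ra => a₃ * ((σ Ra)^3 - 3*σ Ra*(ρ Ra)^2)
        + a₂ * ((σ Ra)^2 - (ρ Ra)^2) + (a₁ Ra * σ Ra + a₀ Ra)) = fun _ => (0:ℝ) :=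
      funext fun Ra => (parts Ra).1
    rw [hf]
    exact hasDerivAt_const _ _
  have hD1 := hPcomb.unique hP0
  -- derivative of the imaginary part
  have hQcomb := ((((hσ.pow 2).const_mul 3).mul hρ).sub (hρ.pow 3)).const_mul a₃ |>.add
      (((hσ.const_mul 2).mul hρ).const_mul a₂) |>.add (ha₁.mul hρ)
  have hQ0 : HasDerivAt (fun Ra => a₃ * ((3*(σ Ra)^2)*ρ Ra - (ρ Ra)^3)
      + a₂ * ((2*σ Ra)*ρ Ra) + a₁ Ra * ρ Ra) 0 Rac := by
    have hf : (fun Ra => a₃ * ((3*(σ Ra)^2)*ρ Ra - (ρ Ra)^3)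
        + a₂ * ((2*σ Ra)*ρ Ra) + a₁ Ra * ρ Ra) = fun _ => (0:ℝ) :=
      funext fun Ra => by linear_combination (parts Ra).2
    rw [hf]
    exact hasDerivAt_const _ _
  have hD2 := hQcomb.unique hQ0
  simp only [Pi.pow_apply] at hD1 hD2
  -- clean forms of the differentiated equations at Rac
  rw [hσc] at hD1 hD2
  have e1 : -3*a₃*(ρ Rac)^2*σ' - 2*a₂*(ρ Rac)*ρ' + a₁ Rac*σ' + a₀' = 0 := by
    linear_combination hD1
  have e2 : 2*a₂*(ρ Rac)*σ' - 3*a₃*(ρ Rac)^2*ρ' + a₁ Rac*ρ' + a₁'*(ρ Rac) = 0 := by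
    linear_combination hD2
  have key : σ' * (2*a₂^2*(ρ Rac)^2 + 2*(a₁ Rac)^2) = a₁ Rac * a₀' - a₀ Rac * a₁' := by
    linear_combination (-(a₁ Rac))*e1 + (a₂*ρ Rac)*e2
      + (3*(a₁ Rac)*σ' - 3*a₂*(ρ Rac)*ρ')*e0im + a₁'*e0re
  have ha1pos : 0 < a₁ Rac := by
    rw [e0im]; positivity
  have hdpos : 0 < 2*a₂^2*(ρ Rac)^2 + 2*(a₁ Rac)^2 := by
    nlinarith [sq_nonneg (a₂ * ρ Rac), pow_pos ha1pos 2]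
  have hval : σ' = (a₁ Rac * a₀' - a₀ Rac * a₁') / (2 * a₂ ^ 2 * (ρ Rac) ^ 2 + 2 * (a₁ Rac) ^ 2) := by
    field_simp
    linear_combination key
  refine ⟨hval, ?_⟩
  rw [hval, lt_div_iff₀ hdpos, zero_mul]
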